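/- Suppose ξ : S_{=ℓ} → ℤ satisfies E'(ξ)(U) = 0 for every U ∈ S_{<ℓ}. For an R-submodule V of M define V^⊥ = {y ∈ W : tr(x·y) = 0 for all x ∈ V}, where W = M_{m×k}(F_q) is the right R-module of m×k matrices and tr denotes the trace of the k×k matrix x·y. Then ∑_{V ∈ S_{=ℓ}} ξ(V) 1_{V^⊥} = 0 as a function W → ℤ; that is, for every y ∈ W, ∑_{V ∈ S_{=ℓ}, y ∈ V^⊥} ξ(V) = 0. -/

import Mathlib

variable (F : Type) [Field F] [Fintype F] (k m : ℕ)

/-- The matrix module `M = M_{k×m}(F)` as a left module over `R = M_{k×k}(F)`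
via matrix multiplication. -/
instance matSMul : SMul (Matrix (Fin k) (Fin k) F) (Matrix (Fin k) (Fin m) F) :=
  ⟨fun A X => A * X⟩

instance matModule : Module (Matrix (Fin k) (Fin k) F) (Matrix (Fin k) (Fin m) F) where
  one_smul X := Matrix.one_mul X
  mul_smul A B X := Matrix.mul_assoc A B X
  smul_zero A := Matrix.mul_zero A
  smul_add A X Y := Matrix.mul_add A X Y
  add_smul A B X := Matrix.add_mul A B X
  zero_smul X := Matrix.zero_mul X

instance matTower :
    IsScalarTower F (Matrix (Fin k) (Fin k) F) (Matrix (Fin k) (Fin m) F) :=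
  ⟨fun c A X => Matrix.smul_mul c A X⟩

noncomputable instance :
    Fintype (Submodule (Matrix (Fin k) (Fin k) F) (Matrix (Fin k) (Fin m) F)) :=
  Fintype.ofFinite _

/-- The dimension of an `R`-submodule `U ⊆ M`, i.e. `dim_{F_q}(U) / k`. -/
noncomputable def dimk
    (U : Submodule (Matrix (Fin k) (Fin k) F) (Matrix (Fin k) (Fin m) F)) : ℕ :=
  Module.finrank F (U.restrictScalars F) / k

open Classical in
/-- `η_V(U) = (−1)^(dim V − dim U) · q^(binom(dim V − dim U, 2))` if `U ⊆ V`, else `0`. -/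
noncomputable def etaV
    (V U : Submodule (Matrix (Fin k) (Fin k) F) (Matrix (Fin k) (Fin m) F)) : ℚ :=
  if U ≤ V then
    (-1 : ℚ) ^ (dimk F k m V - dimk F k m U) *
      (Fintype.card F : ℚ) ^ ((dimk F k m V - dimk F k m U).choose 2)
  else 0

namespace SKaux

set_option linter.unusedSectionVars false
set_option linter.unusedVariables false

open Matrix

variable {F k m}

local notation "Rmat" => Matrix (Fin k) (Fin k) F
local notation "Mmat" => Matrix (Fin k) (Fin m) F

lemma smul_eq_mul' (A : Rmat) (x : Mmat) : A • x = A * x := rfl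

/-- Extraction of the `i`-th row, as an `F`-linear map. -/
def rowL (i : Fin k) : Mmat →ₗ[F] (Fin m → F) where
  toFun x := x i
  map_add' _ _ := rfl
  map_smul' _ _ := rfl

lemma stdrow {a b : ℕ} (r i' : Fin a) (B : Matrix (Fin a) (Fin b) F) (s : Fin a) :
    (Matrix.single r i' (1 : F) * B) s = if s = r then B i' else 0 := by
  funext j
  rw [Matrix.mul_apply]
  by_cases hs : s = r
  · subst hs
    simp [Matrix.single, ite_and]
  · have hrs : r ≠ s := fun h => hs h.symm
    simp [Matrix.single, hrs, hs, ite_and]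

/-- The row space of an `R`-submodule of `M_{k×m}(F)`. -/
noncomputable def rs (hk : 0 < k) (V : Submodule Rmat Mmat) : Submodule F (Fin m → F) :=
  (V.restrictScalars F).map (rowL ⟨0, hk⟩)

lemma row_mem_rs (hk : 0 < k) {V : Submodule Rmat Mmat} {x : Mmat} (hx : x ∈ V) (i : Fin k) :
    x i ∈ rs hk V := by
  set i0 : Fin k := ⟨0, hk⟩ with hi0
  refine Submodule.mem_map.mpr ⟨Matrix.single i0 i (1 : F) * x, ?_, ?_⟩
  · rw [Submodule.restrictScalars_mem, ← smul_eq_mul']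
    exact V.smul_mem _ hx
  · show (Matrix.single i0 i (1 : F) * x) i0 = x i
    rw [stdrow i0 i x i0]
    simp

lemma mem_of_rows (hk : 0 < k) {V : Submodule Rmat Mmat} {x : Mmat}
    (h : ∀ i, x i ∈ rs hk V) : x ∈ V := by
  choose w hw hw2 using fun i => Submodule.mem_map.mp (h i)
  set i0 : Fin k := ⟨0, hk⟩ with hi0
  have hx : x = ∑ i : Fin k, Matrix.single i i0 (1 : F) • w i := by
    ext r j
    rw [Matrix.sum_apply]
    have hterm : ∀ i : Fin k,
        (Matrix.single i i0 (1 : F) • w i) r j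
          = if r = i then w i i0 j else 0 := by
      intro i
      rw [smul_eq_mul']
      have hrw := congrFun (stdrow i i0 (w i) r) j
      rw [hrw]
      by_cases h' : r = i <;> simp [h']
    rw [Finset.sum_congr rfl fun i _ => hterm i, Finset.sum_ite_eq]
    simp only [Finset.mem_univ, if_true]
    exact (congrFun (hw2 r) j).symm
  rw [hx]
  exact Submodule.sum_mem _ fun i _ =>
    V.smul_mem _ ((Submodule.restrictScalars_mem F V _).mp (hw i))

lemma rs_mono (hk : 0 < k) {U V : Submodule Rmat Mmat} (h : U ≤ V) : rs hk U ≤ rs hk V :=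
  Submodule.map_mono (fun x hx => h hx)

lemma le_of_rs_le (hk : 0 < k) {U V : Submodule Rmat Mmat} (h : rs hk U ≤ rs hk V) : U ≤ V :=
  fun _x hx => mem_of_rows hk fun i => h (row_mem_rs hk hx i)

lemma rs_inj (hk : 0 < k) {U V : Submodule Rmat Mmat} (h : rs hk U = rs hk V) : U = V :=
  le_antisymm (le_of_rs_le hk h.le) (le_of_rs_le hk h.ge)

/-- A submodule is `F`-linearly equivalent with `k` copies of its row space. -/
noncomputable def rsEquiv (hk : 0 < k) (V : Submodule Rmat Mmat) :
    (V.restrictScalars F) ≃ₗ[F] (Fin k → rs hk V) where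
  toFun x := fun i => ⟨x.1 i, row_mem_rs hk x.2 i⟩
  map_add' _ _ := rfl
  map_smul' _ _ := rfl
  invFun f := ⟨Matrix.of fun i j => (f i).1 j, mem_of_rows hk fun i => (f i).2⟩
  left_inv x := rfl
  right_inv f := rfl

lemma finrank_eq (hk : 0 < k) (V : Submodule Rmat Mmat) :
    Module.finrank F (V.restrictScalars F) = k * Module.finrank F (rs hk V) := by
  rw [(rsEquiv hk V).finrank_eq, Module.finrank_pi_fintype, Finset.sum_const,
    Finset.card_univ, Fintype.card_fin, smul_eq_mul]

lemma dimk_eq (hk : 0 < k) (V : Submodule Rmat Mmat) :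
    dimk F k m V = Module.finrank F (rs hk V) := by
  unfold dimk
  rw [finrank_eq hk V, Nat.mul_div_cancel_left _ hk]

lemma dimk_mono (hk : 0 < k) {U V : Submodule Rmat Mmat} (h : U ≤ V) :
    dimk F k m U ≤ dimk F k m V := by
  rw [dimk_eq hk, dimk_eq hk]
  exact Submodule.finrank_mono (rs_mono hk h)

lemma eq_of_le_of_dimk (hk : 0 < k) {U V : Submodule Rmat Mmat} (h : U ≤ V)
    (hd : dimk F k m V ≤ dimk F k m U) : U = V := by
  have h2 : rs hk U = rs hk V :=
    Submodule.eq_of_le_of_finrank_le (rs_mono hk h)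
      (by rw [← dimk_eq hk, ← dimk_eq hk]; exact hd)
  exact rs_inj hk h2

lemma dimk_eq_zero_iff (hk : 0 < k) {V : Submodule Rmat Mmat} :
    dimk F k m V = 0 ↔ V = ⊥ := by
  constructor
  · intro h0
    rw [dimk_eq hk] at h0
    have hbot : rs hk V = ⊥ := Submodule.finrank_eq_zero.mp h0
    have : V ≤ ⊥ := le_of_rs_le hk (le_trans hbot.le bot_le)
    exact le_bot_iff.mp this
  · rintro rfl
    rw [dimk_eq hk]
    have : rs hk (⊥ : Submodule Rmat Mmat) = ⊥ := by
      rw [rs, Submodule.restrictScalars_bot, Submodule.map_bot]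
    rw [this, finrank_bot]

lemma mul_row (A : Rmat) (x : Mmat) (i : Fin k) : (A * x) i = ∑ s : Fin k, A i s • x s := by
  funext j
  rw [Matrix.mul_apply, Finset.sum_apply]
  simp [smul_eq_mul]

lemma rs_span (hk : 0 < k) {ι : Type} (u : ι → Mmat) :
    rs hk (Submodule.span Rmat (Set.range u))
      = Submodule.span F (Set.range fun p : ι × Fin k => u p.1 p.2) := by
  apply le_antisymm
  · have key : ∀ x ∈ Submodule.span Rmat (Set.range u), ∀ i : Fin k,
        x i ∈ Submodule.span F (Set.range fun p : ι × Fin k => u p.1 p.2) := by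
      intro x hx
      induction hx using Submodule.span_induction with
      | mem x hxx =>
          obtain ⟨a, rfl⟩ := hxx
          exact fun i => Submodule.subset_span ⟨(a, i), rfl⟩
      | zero => intro i; exact (Submodule.span F _).zero_mem
      | add x y hx hy ihx ihy => intro i; exact Submodule.add_mem _ (ihx i) (ihy i)
      | smul A x hxx ih =>
          intro i
          rw [smul_eq_mul', mul_row]
          exact Submodule.sum_mem _ fun s _ => Submodule.smul_mem _ _ (ih s)
    rintro v hv
    obtain ⟨x, hx, rfl⟩ := Submodule.mem_map.mp hv
    exact key x hx _
  · rw [Submodule.span_le]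
    rintro _ ⟨p, rfl⟩
    exact row_mem_rs hk (Submodule.subset_span (Set.mem_range_self p.1)) p.2

lemma span_top_iff_li (n ℓ' : ℕ) (u : Fin n → (Fin ℓ' → F)) :
    Submodule.span F (Set.range u) = ⊤
      ↔ LinearIndependent F (fun j : Fin ℓ' => fun i : Fin n => u i j) := by
  set v : Fin ℓ' → (Fin n → F) := fun j => fun i => u i j with hv
  have e1 : Module.finrank F (Submodule.span F (Set.range u)) = (Matrix.of u).rank :=
    (Matrix.rank_eq_finrank_span_row (Matrix.of u)).symm
  have hvt : Matrix.of v = (Matrix.of u)ᵀ := by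
    ext a b
    rfl
  have e2 : Module.finrank F (Submodule.span F (Set.range v)) = (Matrix.of u).rank := by
    rw [← Matrix.rank_transpose (Matrix.of u), ← hvt]
    exact (Matrix.rank_eq_finrank_span_row (Matrix.of v)).symm
  have hpi : Module.finrank F (Fin ℓ' → F) = ℓ' := by simp
  constructor
  · intro h
    rw [linearIndependent_iff_card_eq_finrank_span]
    simp only [Set.finrank]
    rw [e2, ← e1, h, finrank_top, hpi, Fintype.card_fin]
  · intro h
    apply Submodule.eq_top_of_finrank_eq
    rw [linearIndependent_iff_card_eq_finrank_span] at h
    simp only [Set.finrank] at h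
    rw [e2, Fintype.card_fin] at h
    rw [e1, ← h, hpi]

lemma card_li (n ℓ' : ℕ) :
    ((Nat.card {v : Fin ℓ' → (Fin n → F) // LinearIndependent F v} : ℚ)) =
      ∏ i ∈ Finset.range ℓ',
        ((Fintype.card F : ℚ) ^ n - (Fintype.card F : ℚ) ^ i) := by
  have hfr : Module.finrank F (Fin n → F) = n := by simp
  rcases le_or_gt ℓ' n with hle | hlt
  · have hcard := card_linearIndependent (K := F) (V := Fin n → F) (k := ℓ')
      (by rw [hfr]; exact hle)
    rw [hcard, hfr, Nat.cast_prod, Fin.prod_univ_eq_prod_range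
      (fun i => ((Fintype.card F ^ n - Fintype.card F ^ i : ℕ) : ℚ))]
    refine Finset.prod_congr rfl fun i hi => ?_
    have hple : Fintype.card F ^ i ≤ Fintype.card F ^ n :=
      Nat.pow_le_pow_right Fintype.card_pos (le_trans (Finset.mem_range.mp hi).le hle)
    push_cast [Nat.cast_sub hple]
    ring
  · have hempty : IsEmpty {v : Fin ℓ' → (Fin n → F) // LinearIndependent F v} := by
      constructor
      rintro ⟨v, hv⟩
      have hcle := hv.fintype_card_le_finrank
      rw [Fintype.card_fin, hfr] at hcle
      omega
    rw [Nat.card_of_isEmpty]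
    symm
    apply Finset.prod_eq_zero (Finset.mem_range.mpr hlt)
    simp

lemma map_span_range_val {W' : Type} [AddCommGroup W'] [Module F W'] (s : Submodule F W')
    {ι : Type} (u' : ι → s) :
    Submodule.span F (Set.range fun i => (u' i : W'))
      = Submodule.map s.subtype (Submodule.span F (Set.range u')) := by
  rw [Submodule.map_span]
  congr 1
  ext z
  simp [Set.mem_image]

lemma span_val_top_iff {W' : Type} [AddCommGroup W'] [Module F W'] (s : Submodule F W')
    {ι : Type} (u' : ι → s) :
    Submodule.span F (Set.range fun i => (u' i : W')) = s
      ↔ Submodule.span F (Set.range u') = ⊤ := by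
  rw [map_span_range_val]
  constructor
  · intro h
    apply Submodule.map_injective_of_injective s.injective_subtype
    rw [h, Submodule.map_top, Submodule.range_subtype]
  · intro h
    rw [h, Submodule.map_top, Submodule.range_subtype]

/-- Tuples spanning a given submodule correspond to spanning tuples of the submodule. -/
def spanSubtypeEquiv {W' : Type} [AddCommGroup W'] [Module F W'] (s : Submodule F W')
    (ι : Type) :
    {u : ι → W' // Submodule.span F (Set.range u) = s}
      ≃ {u' : ι → s // Submodule.span F (Set.range u') = ⊤} where
  toFun u := ⟨fun i => ⟨u.1 i, by
    have hmem : u.1 i ∈ Submodule.span F (Set.range u.1) := Submodule.subset_span ⟨i, rfl⟩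
    rwa [u.2] at hmem⟩,
    (span_val_top_iff s _).mp u.2⟩
  invFun u' := ⟨fun i => (u'.1 i : W'), (span_val_top_iff s _).mpr u'.2⟩
  left_inv u := rfl
  right_inv u' := rfl

lemma card_spanning (ℓ' : ℕ) (W : Type) [AddCommGroup W] [Module F W] [FiniteDimensional F W]
    (hW : Module.finrank F W = ℓ') (ι : Type) [Fintype ι] :
    ((Nat.card {u : ι → W // Submodule.span F (Set.range u) = ⊤} : ℚ)) =
      ∏ i ∈ Finset.range ℓ',
        ((Fintype.card F : ℚ) ^ (Fintype.card ι) - (Fintype.card F : ℚ) ^ i) := by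
  classical
  have e : W ≃ₗ[F] (Fin ℓ' → F) :=
    LinearEquiv.ofFinrankEq _ _ (by rw [hW]; simp)
  set n := Fintype.card ι with hn
  have eI : ι ≃ Fin n := Fintype.equivFin ι
  have equiv1 : {u : ι → W // Submodule.span F (Set.range u) = ⊤}
      ≃ {u : Fin n → (Fin ℓ' → F) // Submodule.span F (Set.range u) = ⊤} := by
    refine Equiv.subtypeEquiv (Equiv.arrowCongr eI e.toEquiv) ?_
    intro u
    have hr : Set.range ((Equiv.arrowCongr eI e.toEquiv) u) = e '' Set.range u := by
      ext z
      constructor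
      · rintro ⟨i, rfl⟩
        exact ⟨u (eI.symm i), ⟨_, rfl⟩, rfl⟩
      · rintro ⟨_, ⟨i, rfl⟩, rfl⟩
        exact ⟨eI i, by simp [Equiv.arrowCongr]⟩
    have hker : LinearMap.ker (e : W →ₗ[F] (Fin ℓ' → F)) = ⊥ := LinearEquiv.ker e
    rw [hr, ← LinearEquiv.coe_coe, Submodule.span_image (e : W →ₗ[F] (Fin ℓ' → F)),
      LinearMap.map_eq_top_iff (LinearMap.range_eq_top.mpr e.surjective), hker, sup_bot_eq]
  rw [Nat.card_congr equiv1]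
  have equiv2 : {u : Fin n → (Fin ℓ' → F) // Submodule.span F (Set.range u) = ⊤}
      ≃ {v : Fin ℓ' → (Fin n → F) // LinearIndependent F v} := by
    refine Equiv.subtypeEquiv
      (⟨fun u => fun j i => u i j, fun v => fun i j => v j i, fun u => rfl, fun v => rfl⟩ :
        (Fin n → Fin ℓ' → F) ≃ (Fin ℓ' → Fin n → F)) ?_
    intro u
    exact span_top_iff_li n ℓ' u
  rw [Nat.card_congr equiv2, card_li]

lemma card_subtype_sum {α : Type} [Fintype α] (p : α → Prop) [DecidablePred p] :
    ((Nat.card {a : α // p a} : ℚ)) = ∑ a : α, if p a then (1 : ℚ) else 0 := by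
  classical
  rw [Nat.card_eq_fintype_card, Fintype.card_subtype, Finset.card_filter]
  push_cast
  rfl

lemma card_submodule (hk : 0 < k) (P : Submodule Rmat Mmat) :
    Nat.card P = Fintype.card F ^ (k * dimk F k m P) := by
  have e : {x : Mmat // x ∈ P} ≃ (P.restrictScalars F) :=
    Equiv.subtypeEquivRight (fun x => Iff.rfl)
  rw [Nat.card_congr e]
  have : Fintype (P.restrictScalars F) := Fintype.ofFinite _
  rw [Nat.card_eq_fintype_card, Module.card_eq_pow_finrank (K := F), finrank_eq hk, dimk_eq hk]

lemma trace_std (B : Matrix (Fin k) (Fin k) F) (i j' : Fin k) :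
    Matrix.trace (Matrix.single j' i (1 : F) * B) = B i j' := by
  have hdiag : ∀ s : Fin k, (Matrix.single j' i (1 : F) * B) s s
      = if s = j' then B i s else 0 := by
    intro s
    have hrow := congrFun (stdrow j' i B s) s
    rw [hrow]
    by_cases h : s = j' <;> simp [h]
  rw [Matrix.trace]
  simp only [Matrix.diag]
  rw [Finset.sum_congr rfl fun s _ => hdiag s, Finset.sum_ite_eq']
  simp

def infEquiv (V N : Submodule Rmat Mmat) (j : ℕ) :
    (Fin j → ↥(V ⊓ N)) ≃ {w : Fin j → ↥N // ∀ i, (w i : Mmat) ∈ V} where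
  toFun w := ⟨fun i => ⟨(w i : Mmat), (Submodule.mem_inf.mp (w i).2).2⟩,
    fun i => (Submodule.mem_inf.mp (w i).2).1⟩
  invFun w := fun i => ⟨((w.1 i : Mmat)), Submodule.mem_inf.mpr ⟨w.2 i, (w.1 i).2⟩⟩
  left_inv w := rfl
  right_inv w := rfl

def equivA (N V : Submodule Rmat Mmat) (hVN : V ≤ N) (j : ℕ) :
    {w : Fin j → ↥N // Submodule.span Rmat (Set.range fun i => (w i : Mmat)) = V}
      ≃ {w : Fin j → Mmat // Submodule.span Rmat (Set.range w) = V} where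
  toFun w := ⟨fun i => (w.1 i : Mmat), w.2⟩
  invFun w := ⟨fun i => ⟨w.1 i, hVN (by
      have hmem : w.1 i ∈ Submodule.span Rmat (Set.range w.1) :=
        Submodule.subset_span (Set.mem_range_self i)
      rwa [w.2] at hmem)⟩, w.2⟩
  left_inv w := rfl
  right_inv w := rfl

noncomputable def equivB (hk : 0 < k) (V : Submodule Rmat Mmat) (j : ℕ) :
    {w : Fin j → Mmat // Submodule.span Rmat (Set.range w) = V}
      ≃ {u : Fin j × Fin k → (Fin m → F) // Submodule.span F (Set.range u) = rs hk V} where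
  toFun w := ⟨fun p => w.1 p.1 p.2, by rw [← rs_span hk w.1]; exact congrArg (rs hk) w.2⟩
  invFun u := ⟨fun i => Matrix.of fun r c => u.1 (i, r) c, by
    apply rs_inj hk
    rw [rs_span hk]
    exact u.2⟩
  left_inv w := rfl
  right_inv u := rfl

noncomputable def countEquiv (hk : 0 < k) (N V : Submodule Rmat Mmat) (hVN : V ≤ N) (j : ℕ) :
    {w : Fin j → ↥N // Submodule.span Rmat (Set.range fun i => (w i : Mmat)) = V}
      ≃ {u : Fin j × Fin k → ↥(rs hk V) // Submodule.span F (Set.range u) = ⊤} :=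
  (equivA N V hVN j).trans ((equivB hk V j).trans (spanSubtypeEquiv (rs hk V) (Fin j × Fin k)))

end SKaux

open Classical in
/-- Dual version: if `ξ : S_{=ℓ} → ℤ` is in the kernel of `E'`, then
`∑_{V ∈ S_{=ℓ}} ξ(V) 1_{V^⊥} = 0` as a function `W → ℤ`, where
`W = M_{m×k}(F_q)` and `V^⊥ = {y ∈ W : tr(x·y) = 0 for all x ∈ V}`. -/
theorem sum_indicator_perp_eq_zero_of_ker_E' (hk : 0 < k) (l : ℕ) (hl : l > k) (hml : m ≥ l)
    (X : Submodule (Matrix (Fin k) (Fin k) F) (Matrix (Fin k) (Fin m) F))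
    (hX : dimk F k m X = m - l)
    (ξ : {V : Submodule (Matrix (Fin k) (Fin k) F) (Matrix (Fin k) (Fin m) F) //
            dimk F k m V = l ∧ V ⊓ X = ⊥} → ℤ)
    (hker : ∀ U : Submodule (Matrix (Fin k) (Fin k) F) (Matrix (Fin k) (Fin m) F),
      dimk F k m U < l → U ⊓ X = ⊥ →
      ∑ V : {V : Submodule (Matrix (Fin k) (Fin k) F) (Matrix (Fin k) (Fin m) F) //
               dimk F k m V = l ∧ V ⊓ X = ⊥},
        (ξ V : ℚ) * etaV F k m (V : Submodule (Matrix (Fin k) (Fin k) F) (Matrix (Fin k) (Fin m) F)) U = 0) :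
    ∀ y : Matrix (Fin m) (Fin k) F,
      ∑ V : {V : Submodule (Matrix (Fin k) (Fin k) F) (Matrix (Fin k) (Fin m) F) //
               dimk F k m V = l ∧ V ⊓ X = ⊥},
        Set.indicator
          {y' : Matrix (Fin m) (Fin k) F |
            ∀ x ∈ (V : Submodule (Matrix (Fin k) (Fin k) F) (Matrix (Fin k) (Fin m) F)),
              Matrix.trace (x * y') = 0}
          (fun _ => ξ V) y = 0 := by
  classical
  intro y
  -- the right annihilator of `y`, an `R`-submodule of `M`
  let N : Submodule (Matrix (Fin k) (Fin k) F) (Matrix (Fin k) (Fin m) F) :=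
    { carrier := {x | x * y = 0}
      add_mem' := by
        intro a b ha hb
        have ha' : a * y = 0 := ha
        have hb' : b * y = 0 := hb
        show (a + b) * y = 0
        rw [Matrix.add_mul, ha', hb', add_zero]
      zero_mem' := by
        show (0 : Matrix (Fin k) (Fin m) F) * y = 0
        rw [Matrix.zero_mul]
      smul_mem' := by
        intro c x hx
        have hx' : x * y = 0 := hx
        show (c • x) * y = 0
        rw [SKaux.smul_eq_mul', Matrix.mul_assoc, hx', Matrix.mul_zero] }
  -- Step A: rewrite the indicators
  have hperp : ∀ V : {V : Submodule (Matrix (Fin k) (Fin k) F) (Matrix (Fin k) (Fin m) F) // dimk F k m V = l ∧ V ⊓ X = ⊥},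
      Set.indicator
          {y' : Matrix (Fin m) (Fin k) F |
            ∀ x ∈ (V : Submodule (Matrix (Fin k) (Fin k) F) (Matrix (Fin k) (Fin m) F)),
              Matrix.trace (x * y') = 0}
          (fun _ => ξ V) y = if (V : Submodule (Matrix (Fin k) (Fin k) F) (Matrix (Fin k) (Fin m) F)) ≤ N then ξ V else 0 := by
    intro V
    rw [Set.indicator_apply]
    have hiff : (y ∈ {y' : Matrix (Fin m) (Fin k) F |
        ∀ x ∈ (V : Submodule (Matrix (Fin k) (Fin k) F) (Matrix (Fin k) (Fin m) F)), Matrix.trace (x * y') = 0}) ↔ (V : Submodule (Matrix (Fin k) (Fin k) F) (Matrix (Fin k) (Fin m) F)) ≤ N := by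
      constructor
      · intro hy x hx
        show x * y = 0
        ext i j'
        have hmem : Matrix.single j' i (1 : F) * x ∈ (V : Submodule (Matrix (Fin k) (Fin k) F) (Matrix (Fin k) (Fin m) F)) := by
          rw [← SKaux.smul_eq_mul']
          exact (V : Submodule (Matrix (Fin k) (Fin k) F) (Matrix (Fin k) (Fin m) F)).smul_mem _ hx
        have hA := hy _ hmem
        rw [Matrix.mul_assoc, SKaux.trace_std (x * y) i j'] at hA
        simpa using hA
      · intro hle x hx
        have hxy : x * y = 0 := hle hx
        rw [hxy, Matrix.trace_zero]
    by_cases h : (V : Submodule (Matrix (Fin k) (Fin k) F) (Matrix (Fin k) (Fin m) F)) ≤ N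
    · rw [if_pos (hiff.mpr h), if_pos h]
    · rw [if_neg (fun hy => h (hiff.mp hy)), if_neg h]
  rw [Finset.sum_congr rfl fun V _ => hperp V]
  -- Step B: the kernel condition, with indicators instead of `etaV`
  have hsig0 : ∀ U : Submodule (Matrix (Fin k) (Fin k) F) (Matrix (Fin k) (Fin m) F), dimk F k m U < l →
      (∑ V : {V : Submodule (Matrix (Fin k) (Fin k) F) (Matrix (Fin k) (Fin m) F) // dimk F k m V = l ∧ V ⊓ X = ⊥}, (ξ V : ℚ) * (if U ≤ (V : Submodule (Matrix (Fin k) (Fin k) F) (Matrix (Fin k) (Fin m) F)) then 1 else 0)) = 0 := by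
    intro U hU
    by_cases hUX : U ⊓ X = ⊥
    · have h := hker U hU hUX
      have hfac : ∀ V : {V : Submodule (Matrix (Fin k) (Fin k) F) (Matrix (Fin k) (Fin m) F) // dimk F k m V = l ∧ V ⊓ X = ⊥}, (ξ V : ℚ) * etaV F k m (V : Submodule (Matrix (Fin k) (Fin k) F) (Matrix (Fin k) (Fin m) F)) U
          = ((-1 : ℚ) ^ (l - dimk F k m U) * (Fintype.card F : ℚ) ^ ((l - dimk F k m U).choose 2))
            * ((ξ V : ℚ) * (if U ≤ (V : Submodule (Matrix (Fin k) (Fin k) F) (Matrix (Fin k) (Fin m) F)) then 1 else 0)) := by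
        intro V
        simp only [etaV]
        rw [V.2.1]
        by_cases hle : U ≤ (V : Submodule (Matrix (Fin k) (Fin k) F) (Matrix (Fin k) (Fin m) F))
        · rw [if_pos hle, if_pos hle]; ring
        · rw [if_neg hle, if_neg hle]; ring
      rw [Finset.sum_congr rfl fun V _ => hfac V, ← Finset.mul_sum] at h
      have hrho : ((-1 : ℚ) ^ (l - dimk F k m U) * (Fintype.card F : ℚ) ^ ((l - dimk F k m U).choose 2)) ≠ 0 :=
        mul_ne_zero (pow_ne_zero _ (by norm_num))
          (pow_ne_zero _ (Nat.cast_ne_zero.mpr Fintype.card_ne_zero))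
      exact (mul_eq_zero.mp h).resolve_left hrho
    · apply Finset.sum_eq_zero
      intro V _
      have hnle : ¬ U ≤ (V : Submodule (Matrix (Fin k) (Fin k) F) (Matrix (Fin k) (Fin m) F)) := by
        intro hle
        exact hUX (le_bot_iff.mp (le_trans (inf_le_inf_right X hle) (le_of_eq V.2.2)))
      rw [if_neg hnle, mul_zero]
  -- indicators of `≤` can be replaced by indicators of `=`
  have hsig : ∀ U : Submodule (Matrix (Fin k) (Fin k) F) (Matrix (Fin k) (Fin m) F),
      (∑ V : {V : Submodule (Matrix (Fin k) (Fin k) F) (Matrix (Fin k) (Fin m) F) // dimk F k m V = l ∧ V ⊓ X = ⊥}, (ξ V : ℚ) * (if U ≤ (V : Submodule (Matrix (Fin k) (Fin k) F) (Matrix (Fin k) (Fin m) F)) then 1 else 0))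
        = ∑ V : {V : Submodule (Matrix (Fin k) (Fin k) F) (Matrix (Fin k) (Fin m) F) // dimk F k m V = l ∧ V ⊓ X = ⊥}, (ξ V : ℚ) * (if U = (V : Submodule (Matrix (Fin k) (Fin k) F) (Matrix (Fin k) (Fin m) F)) then 1 else 0) := by
    intro U
    rcases lt_trichotomy (dimk F k m U) l with hU | hU | hU
    · rw [hsig0 U hU]
      symm
      apply Finset.sum_eq_zero
      intro V _
      have hne : ¬ U = (V : Submodule (Matrix (Fin k) (Fin k) F) (Matrix (Fin k) (Fin m) F)) := by
        intro h
        rw [h, V.2.1] at hU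
        exact lt_irrefl _ hU
      rw [if_neg hne, mul_zero]
    · apply Finset.sum_congr rfl
      intro V _
      have hiff : U ≤ (V : Submodule (Matrix (Fin k) (Fin k) F) (Matrix (Fin k) (Fin m) F)) ↔ U = (V : Submodule (Matrix (Fin k) (Fin k) F) (Matrix (Fin k) (Fin m) F)) :=
        ⟨fun h => SKaux.eq_of_le_of_dimk hk h (by rw [V.2.1, hU]), le_of_eq⟩
      by_cases h : U = (V : Submodule (Matrix (Fin k) (Fin k) F) (Matrix (Fin k) (Fin m) F))
      · rw [if_pos (hiff.mpr h), if_pos h]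
      · rw [if_neg (fun hle => h (hiff.mp hle)), if_neg h]
    · apply Finset.sum_congr rfl
      intro V _
      have h2 : ¬ U ≤ (V : Submodule (Matrix (Fin k) (Fin k) F) (Matrix (Fin k) (Fin m) F)) := by
        intro hle
        have hmono := SKaux.dimk_mono hk hle
        rw [V.2.1] at hmono
        omega
      have h3 : ¬ U = (V : Submodule (Matrix (Fin k) (Fin k) F) (Matrix (Fin k) (Fin m) F)) := by
        intro h
        rw [h, V.2.1] at hU
        exact lt_irrefl _ hU
      rw [if_neg h2, if_neg h3]
  -- every `V` in the sum meets `N` nontrivially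
  have hbot : ∀ V : {V : Submodule (Matrix (Fin k) (Fin k) F) (Matrix (Fin k) (Fin m) F) // dimk F k m V = l ∧ V ⊓ X = ⊥}, dimk F k m ((V : Submodule (Matrix (Fin k) (Fin k) F) (Matrix (Fin k) (Fin m) F)) ⊓ N) ≠ 0 := by
    intro V h0
    have hVN : (V : Submodule (Matrix (Fin k) (Fin k) F) (Matrix (Fin k) (Fin m) F)) ⊓ N = ⊥ := (SKaux.dimk_eq_zero_iff hk).mp h0
    let φ : (((V : Submodule (Matrix (Fin k) (Fin k) F) (Matrix (Fin k) (Fin m) F))).restrictScalars F) →ₗ[F] Matrix (Fin k) (Fin k) F :=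
      { toFun := fun x => (x : Matrix (Fin k) (Fin m) F) * y
        map_add' := fun x₁ x₂ =>
          Matrix.add_mul (x₁ : Matrix (Fin k) (Fin m) F) (x₂ : Matrix (Fin k) (Fin m) F) y
        map_smul' := fun c x₁ => Matrix.smul_mul c (x₁ : Matrix (Fin k) (Fin m) F) y }
    have hinj : Function.Injective φ := by
      rw [← LinearMap.ker_eq_bot]
      apply (Submodule.eq_bot_iff _).mpr
      intro x hx
      have hx1 : (x : Matrix (Fin k) (Fin m) F) * y = 0 := LinearMap.mem_ker.mp hx
      have hxm : (x : Matrix (Fin k) (Fin m) F) ∈ (V : Submodule (Matrix (Fin k) (Fin k) F) (Matrix (Fin k) (Fin m) F)) ⊓ N :=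
        Submodule.mem_inf.mpr ⟨x.2, hx1⟩
      rw [hVN] at hxm
      exact Subtype.ext ((Submodule.mem_bot _).mp hxm)
    have hle := LinearMap.finrank_le_finrank_of_injective hinj
    rw [SKaux.finrank_eq hk, ← SKaux.dimk_eq hk, V.2.1, Module.finrank_matrix] at hle
    simp only [Fintype.card_fin, Module.finrank_self, mul_one] at hle
    have hlk := Nat.le_of_mul_le_mul_left hle hk
    omega
  -- counting spanning tuples inside `N`
  have hcount : ∀ (j : ℕ) (V : {V : Submodule (Matrix (Fin k) (Fin k) F) (Matrix (Fin k) (Fin m) F) // dimk F k m V = l ∧ V ⊓ X = ⊥}),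
      ((Nat.card {w : Fin j → ↥N //
          Submodule.span (Matrix (Fin k) (Fin k) F)
            (Set.range fun i => (w i : Matrix (Fin k) (Fin m) F)) = (V : Submodule (Matrix (Fin k) (Fin k) F) (Matrix (Fin k) (Fin m) F))} : ℚ))
        = (if (V : Submodule (Matrix (Fin k) (Fin k) F) (Matrix (Fin k) (Fin m) F)) ≤ N then 1 else 0)
            * ∏ i ∈ Finset.range l, ((Fintype.card F : ℚ) ^ (k * j) - (Fintype.card F : ℚ) ^ i) := by
    intro j V
    by_cases hVN : (V : Submodule (Matrix (Fin k) (Fin k) F) (Matrix (Fin k) (Fin m) F)) ≤ N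
    · rw [Nat.card_congr (SKaux.countEquiv hk N (V : Submodule (Matrix (Fin k) (Fin k) F) (Matrix (Fin k) (Fin m) F)) hVN j)]
      rw [SKaux.card_spanning l (↥(SKaux.rs hk (V : Submodule (Matrix (Fin k) (Fin k) F) (Matrix (Fin k) (Fin m) F))))
        (by rw [← SKaux.dimk_eq hk, V.2.1]) (Fin j × Fin k)]
      rw [if_pos hVN, one_mul]
      have hcardprod : Fintype.card (Fin j × Fin k) = k * j := by
        simp [Fintype.card_prod, Nat.mul_comm]
      rw [hcardprod]
    · have hempty : IsEmpty {w : Fin j → ↥N //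
          Submodule.span (Matrix (Fin k) (Fin k) F)
            (Set.range fun i => (w i : Matrix (Fin k) (Fin m) F)) = (V : Submodule (Matrix (Fin k) (Fin k) F) (Matrix (Fin k) (Fin m) F))} := by
        constructor
        rintro ⟨w, hw⟩
        apply hVN
        rw [← hw, Submodule.span_le]
        rintro _ ⟨i, rfl⟩
        exact (w i).2
      rw [Nat.card_of_isEmpty, if_neg hVN, zero_mul]
      simp
  -- the moments
  have hmoment : ∀ j : ℕ,
      (∑ V : {V : Submodule (Matrix (Fin k) (Fin k) F) (Matrix (Fin k) (Fin m) F) // dimk F k m V = l ∧ V ⊓ X = ⊥}, (ξ V : ℚ) * ((Fintype.card F : ℚ) ^ (k * j)) ^ (dimk F k m ((V : Submodule (Matrix (Fin k) (Fin k) F) (Matrix (Fin k) (Fin m) F)) ⊓ N)))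
        = (∑ V : {V : Submodule (Matrix (Fin k) (Fin k) F) (Matrix (Fin k) (Fin m) F) // dimk F k m V = l ∧ V ⊓ X = ⊥}, if (V : Submodule (Matrix (Fin k) (Fin k) F) (Matrix (Fin k) (Fin m) F)) ≤ N then (ξ V : ℚ) else 0)
            * ∏ i ∈ Finset.range l, ((Fintype.card F : ℚ) ^ (k * j) - (Fintype.card F : ℚ) ^ i) := by
    intro j
    have h1 : ∀ V : {V : Submodule (Matrix (Fin k) (Fin k) F) (Matrix (Fin k) (Fin m) F) // dimk F k m V = l ∧ V ⊓ X = ⊥}, ((Fintype.card F : ℚ) ^ (k * j)) ^ (dimk F k m ((V : Submodule (Matrix (Fin k) (Fin k) F) (Matrix (Fin k) (Fin m) F)) ⊓ N))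
        = ((Nat.card {w : Fin j → ↥N //
              ∀ i, (w i : Matrix (Fin k) (Fin m) F) ∈ (V : Submodule (Matrix (Fin k) (Fin k) F) (Matrix (Fin k) (Fin m) F))} : ℚ)) := by
      intro V
      rw [Nat.card_congr (SKaux.infEquiv (V : Submodule (Matrix (Fin k) (Fin k) F) (Matrix (Fin k) (Fin m) F)) N j).symm, Nat.card_fun]
      rw [SKaux.card_submodule hk ((V : Submodule (Matrix (Fin k) (Fin k) F) (Matrix (Fin k) (Fin m) F)) ⊓ N)]
      simp only [Nat.card_eq_fintype_card, Fintype.card_fin]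
      push_cast
      rw [← pow_mul, ← pow_mul]
      ring_nf
    calc (∑ V : {V : Submodule (Matrix (Fin k) (Fin k) F) (Matrix (Fin k) (Fin m) F) // dimk F k m V = l ∧ V ⊓ X = ⊥}, (ξ V : ℚ) * ((Fintype.card F : ℚ) ^ (k * j)) ^ (dimk F k m ((V : Submodule (Matrix (Fin k) (Fin k) F) (Matrix (Fin k) (Fin m) F)) ⊓ N)))
        = ∑ V : {V : Submodule (Matrix (Fin k) (Fin k) F) (Matrix (Fin k) (Fin m) F) // dimk F k m V = l ∧ V ⊓ X = ⊥}, (ξ V : ℚ) * ∑ w : Fin j → ↥N,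
            (if Submodule.span (Matrix (Fin k) (Fin k) F)
              (Set.range fun i => (w i : Matrix (Fin k) (Fin m) F)) ≤ (V : Submodule (Matrix (Fin k) (Fin k) F) (Matrix (Fin k) (Fin m) F))
             then (1 : ℚ) else 0) := by
          refine Finset.sum_congr rfl fun V _ => ?_
          rw [h1 V, SKaux.card_subtype_sum]
          congr 1
          refine Finset.sum_congr rfl fun w _ => ?_
          have hiff : (∀ i, (w i : Matrix (Fin k) (Fin m) F) ∈ (V : Submodule (Matrix (Fin k) (Fin k) F) (Matrix (Fin k) (Fin m) F)))
              ↔ Submodule.span (Matrix (Fin k) (Fin k) F)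
                  (Set.range fun i => (w i : Matrix (Fin k) (Fin m) F)) ≤ (V : Submodule (Matrix (Fin k) (Fin k) F) (Matrix (Fin k) (Fin m) F)) := by
            rw [Submodule.span_le, Set.range_subset_iff]
            simp only [SetLike.mem_coe]
          exact if_congr hiff rfl rfl
      _ = ∑ w : Fin j → ↥N, ∑ V : {V : Submodule (Matrix (Fin k) (Fin k) F) (Matrix (Fin k) (Fin m) F) // dimk F k m V = l ∧ V ⊓ X = ⊥}, (ξ V : ℚ) *
            (if Submodule.span (Matrix (Fin k) (Fin k) F)
              (Set.range fun i => (w i : Matrix (Fin k) (Fin m) F)) ≤ (V : Submodule (Matrix (Fin k) (Fin k) F) (Matrix (Fin k) (Fin m) F))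
             then (1 : ℚ) else 0) := by
          simp_rw [Finset.mul_sum]
          exact Finset.sum_comm
      _ = ∑ w : Fin j → ↥N, ∑ V : {V : Submodule (Matrix (Fin k) (Fin k) F) (Matrix (Fin k) (Fin m) F) // dimk F k m V = l ∧ V ⊓ X = ⊥}, (ξ V : ℚ) *
            (if Submodule.span (Matrix (Fin k) (Fin k) F)
              (Set.range fun i => (w i : Matrix (Fin k) (Fin m) F)) = (V : Submodule (Matrix (Fin k) (Fin k) F) (Matrix (Fin k) (Fin m) F))
             then (1 : ℚ) else 0) :=
          Finset.sum_congr rfl fun w _ => hsig _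
      _ = ∑ V : {V : Submodule (Matrix (Fin k) (Fin k) F) (Matrix (Fin k) (Fin m) F) // dimk F k m V = l ∧ V ⊓ X = ⊥}, ∑ w : Fin j → ↥N, (ξ V : ℚ) *
            (if Submodule.span (Matrix (Fin k) (Fin k) F)
              (Set.range fun i => (w i : Matrix (Fin k) (Fin m) F)) = (V : Submodule (Matrix (Fin k) (Fin k) F) (Matrix (Fin k) (Fin m) F))
             then (1 : ℚ) else 0) := Finset.sum_comm
      _ = ∑ V : {V : Submodule (Matrix (Fin k) (Fin k) F) (Matrix (Fin k) (Fin m) F) // dimk F k m V = l ∧ V ⊓ X = ⊥}, (ξ V : ℚ) *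
            ((Nat.card {w : Fin j → ↥N //
              Submodule.span (Matrix (Fin k) (Fin k) F)
                (Set.range fun i => (w i : Matrix (Fin k) (Fin m) F)) = (V : Submodule (Matrix (Fin k) (Fin k) F) (Matrix (Fin k) (Fin m) F))} : ℚ)) := by
          refine Finset.sum_congr rfl fun V _ => ?_
          rw [← Finset.mul_sum, ← SKaux.card_subtype_sum]
      _ = ∑ V : {V : Submodule (Matrix (Fin k) (Fin k) F) (Matrix (Fin k) (Fin m) F) // dimk F k m V = l ∧ V ⊓ X = ⊥}, (if (V : Submodule (Matrix (Fin k) (Fin k) F) (Matrix (Fin k) (Fin m) F)) ≤ N then (ξ V : ℚ) else 0)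
            * ∏ i ∈ Finset.range l, ((Fintype.card F : ℚ) ^ (k * j) - (Fintype.card F : ℚ) ^ i) := by
          refine Finset.sum_congr rfl fun V _ => ?_
          rw [hcount j V]
          by_cases h : (V : Submodule (Matrix (Fin k) (Fin k) F) (Matrix (Fin k) (Fin m) F)) ≤ N
          · rw [if_pos h, if_pos h]; ring
          · rw [if_neg h, if_neg h]; ring
      _ = (∑ V : {V : Submodule (Matrix (Fin k) (Fin k) F) (Matrix (Fin k) (Fin m) F) // dimk F k m V = l ∧ V ⊓ X = ⊥}, if (V : Submodule (Matrix (Fin k) (Fin k) F) (Matrix (Fin k) (Fin m) F)) ≤ N then (ξ V : ℚ) else 0)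
            * ∏ i ∈ Finset.range l, ((Fintype.card F : ℚ) ^ (k * j) - (Fintype.card F : ℚ) ^ i) := by
          rw [Finset.sum_mul]
  -- polynomial argument
  have hmain : (∑ V : {V : Submodule (Matrix (Fin k) (Fin k) F) (Matrix (Fin k) (Fin m) F) // dimk F k m V = l ∧ V ⊓ X = ⊥}, if (V : Submodule (Matrix (Fin k) (Fin k) F) (Matrix (Fin k) (Fin m) F)) ≤ N then (ξ V : ℚ) else 0) = 0 := by
    set T := ∑ V : {V : Submodule (Matrix (Fin k) (Fin k) F) (Matrix (Fin k) (Fin m) F) // dimk F k m V = l ∧ V ⊓ X = ⊥}, if (V : Submodule (Matrix (Fin k) (Fin k) F) (Matrix (Fin k) (Fin m) F)) ≤ N then (ξ V : ℚ) else 0 with hTdef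
    set Q : Polynomial ℚ :=
      (∑ V : {V : Submodule (Matrix (Fin k) (Fin k) F) (Matrix (Fin k) (Fin m) F) // dimk F k m V = l ∧ V ⊓ X = ⊥}, Polynomial.C (ξ V : ℚ) * Polynomial.X ^ (dimk F k m ((V : Submodule (Matrix (Fin k) (Fin k) F) (Matrix (Fin k) (Fin m) F)) ⊓ N)))
        - Polynomial.C T * ∏ i ∈ Finset.range l, (Polynomial.X - Polynomial.C ((Fintype.card F : ℚ) ^ i))
      with hQdef
    have hQeval : ∀ j : ℕ, Q.eval ((Fintype.card F : ℚ) ^ (k * j)) = 0 := by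
      intro j
      rw [hQdef]
      simp only [Polynomial.eval_sub, Polynomial.eval_finset_sum, Polynomial.eval_mul,
        Polynomial.eval_C, Polynomial.eval_pow, Polynomial.eval_X, Polynomial.eval_prod]
      rw [sub_eq_zero]
      exact hmoment j
    have hQdeg : Q.natDegree ≤ l := by
      rw [hQdef]
      refine le_trans (Polynomial.natDegree_sub_le _ _) (max_le ?_ ?_)
      · refine Polynomial.natDegree_sum_le_of_forall_le _ _ fun V _ => ?_
        refine le_trans (Polynomial.natDegree_C_mul_X_pow_le _ _) ?_
        have hmono := SKaux.dimk_mono hk (inf_le_left : (V : Submodule (Matrix (Fin k) (Fin k) F) (Matrix (Fin k) (Fin m) F)) ⊓ N ≤ (V : Submodule (Matrix (Fin k) (Fin k) F) (Matrix (Fin k) (Fin m) F)))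
        rw [V.2.1] at hmono
        exact hmono
      · refine le_trans (Polynomial.natDegree_C_mul_le _ _) ?_
        refine le_trans (Polynomial.natDegree_prod_le _ _) ?_
        have hdeg1 : ∀ i ∈ Finset.range l,
            (Polynomial.X - Polynomial.C ((Fintype.card F : ℚ) ^ i)).natDegree = 1 :=
          fun i _ => Polynomial.natDegree_X_sub_C _
        rw [Finset.sum_congr rfl hdeg1]
        simp
    have hQ0 : Q = 0 := by
      have hq2 : 1 < Fintype.card F := Fintype.one_lt_card
      refine Polynomial.eq_zero_of_natDegree_lt_card_of_eval_eq_zero Q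
        (f := fun j : Fin (l + 1) => (Fintype.card F : ℚ) ^ (k * (j : ℕ))) ?_ (fun j => hQeval (j : ℕ)) ?_
      · intro j1 j2 hj
        have hj' : (Fintype.card F : ℚ) ^ (k * (j1 : ℕ)) = (Fintype.card F : ℚ) ^ (k * (j2 : ℕ)) := hj
        have hnat : Fintype.card F ^ (k * (j1 : ℕ)) = Fintype.card F ^ (k * (j2 : ℕ)) := by
          exact_mod_cast hj'
        have hmul := Nat.pow_right_injective hq2 hnat
        exact Fin.ext (Nat.eq_of_mul_eq_mul_left hk hmul)
      · rw [Fintype.card_fin]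
        omega
    have h0 := congrArg (Polynomial.eval 0) hQ0
    rw [hQdef] at h0
    simp only [Polynomial.eval_sub, Polynomial.eval_finset_sum, Polynomial.eval_mul,
      Polynomial.eval_C, Polynomial.eval_pow, Polynomial.eval_X, Polynomial.eval_prod,
      Polynomial.eval_zero] at h0
    have hz : ∀ V ∈ (Finset.univ : Finset {V : Submodule (Matrix (Fin k) (Fin k) F) (Matrix (Fin k) (Fin m) F) // dimk F k m V = l ∧ V ⊓ X = ⊥}),
        (ξ V : ℚ) * (0 : ℚ) ^ (dimk F k m ((V : Submodule (Matrix (Fin k) (Fin k) F) (Matrix (Fin k) (Fin m) F)) ⊓ N)) = 0 := by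
      intro V _
      rw [zero_pow (hbot V), mul_zero]
    rw [Finset.sum_eq_zero hz] at h0
    have hprod : (∏ i ∈ Finset.range l, ((0 : ℚ) - (Fintype.card F : ℚ) ^ i)) ≠ 0 := by
      refine Finset.prod_ne_zero_iff.mpr fun i _ => ?_
      rw [zero_sub, neg_ne_zero]
      exact pow_ne_zero _ (Nat.cast_ne_zero.mpr Fintype.card_ne_zero)
    rw [zero_sub, neg_eq_zero] at h0
    exact (mul_eq_zero.mp h0).resolve_right hprod
  -- conclude over `ℤ`
  have hcast : ((∑ V : {V : Submodule (Matrix (Fin k) (Fin k) F) (Matrix (Fin k) (Fin m) F) // dimk F k m V = l ∧ V ⊓ X = ⊥}, if (V : Submodule (Matrix (Fin k) (Fin k) F) (Matrix (Fin k) (Fin m) F)) ≤ N then ξ V else 0 : ℤ) : ℚ)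
      = ∑ V : {V : Submodule (Matrix (Fin k) (Fin k) F) (Matrix (Fin k) (Fin m) F) // dimk F k m V = l ∧ V ⊓ X = ⊥}, if (V : Submodule (Matrix (Fin k) (Fin k) F) (Matrix (Fin k) (Fin m) F)) ≤ N then (ξ V : ℚ) else 0 := by
    push_cast [apply_ite (fun z : ℤ => (z : ℚ))]
    rfl
  exact_mod_cast hcast.trans hmain
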